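/- For every integer n ≥ 8, any two adjacent vertices of the generalized Johnson graph J_{{2}}(n,4) have exactly n(n+3)/2 − 26 common neighbours. -/

import Mathlib

/-- The generalized Johnson graph `J_S(n,k)`: vertices are the `k`-element subsets of
`{1,…,n}` (modelled as `Fin n`), two vertices being adjacent exactly when the size of
their intersection lies in `S`. -/
def genJohnson (n k : ℕ) (S : Set ℕ) :
    SimpleGraph {s : Finset (Fin n) // s.card = k} where
  Adj v w := v ≠ w ∧ (v.1 ∩ w.1).card ∈ S
  symm := by
    constructor
    rintro v w ⟨h1, h2⟩
    exact ⟨h1.symm, by rwa [Finset.inter_comm]⟩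
  loopless := by constructor; rintro v ⟨h, _⟩; exact h rfl

/-- For every integer `n ≥ 8`, any two adjacent vertices of the generalized Johnson
graph `J_{{2}}(n,4)` have exactly `n(n+3)/2 − 26` common neighbours. -/
theorem johnson_two_n_four_common_neighbors (n : ℕ) (hn : 8 ≤ n)
    (v w : {s : Finset (Fin n) // s.card = 4})
    (hvw : (genJohnson n 4 {2}).Adj v w) :
    Nat.card ((genJohnson n 4 {2}).commonNeighbors v w) = n * (n + 3) / 2 - 26 := by
  classical
  obtain ⟨hne, hcard⟩ := hvw
  simp only [Set.mem_singleton_iff] at hcard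
  set A := v.1 ∩ w.1 with hA_def
  set B := v.1 \ w.1 with hB_def
  set C := w.1 \ v.1 with hC_def
  set D := (v.1 ∪ w.1)ᶜ with hD_def
  have hv4 : v.1.card = 4 := v.2
  have hw4 : w.1.card = 4 := w.2
  have hA : A.card = 2 := hcard
  have hB : B.card = 2 := by
    have := Finset.card_inter_add_card_sdiff v.1 w.1
    rw [← hA_def, ← hB_def] at this
    omega
  have hC : C.card = 2 := by
    have := Finset.card_inter_add_card_sdiff w.1 v.1
    rw [Finset.inter_comm, ← hA_def, ← hC_def] at this
    omega
  have hD : D.card = n - 6 := by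
    have h1 := Finset.card_union_add_card_inter v.1 w.1
    rw [← hA_def] at h1
    have h2 : D.card = n - (v.1 ∪ w.1).card := by
      rw [hD_def, Finset.card_compl, Fintype.card_fin]
    omega
  -- disjointness facts
  have hAB : Disjoint A B := (Finset.disjoint_sdiff_inter v.1 w.1).symm
  have hAC : Disjoint A C := by
    rw [hA_def, Finset.inter_comm]
    exact (Finset.disjoint_sdiff_inter w.1 v.1).symm
  have hBC : Disjoint B C := by
    rw [Finset.disjoint_left]
    intro x hx hx'
    simp only [hB_def, hC_def, Finset.mem_sdiff] at hx hx'
    exact hx.2 hx'.1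
  have hvD : Disjoint v.1 D := disjoint_compl_right.mono_left Finset.subset_union_left
  have hwD : Disjoint w.1 D := disjoint_compl_right.mono_left Finset.subset_union_right
  have hAv : A ⊆ v.1 := Finset.inter_subset_left
  have hAw : A ⊆ w.1 := Finset.inter_subset_right
  have hBv : B ⊆ v.1 := Finset.sdiff_subset
  have hCw : C ⊆ w.1 := Finset.sdiff_subset
  have hAD : Disjoint A D := hvD.mono_left hAv
  have hBD : Disjoint B D := hvD.mono_left hBv
  have hCD : Disjoint C D := hwD.mono_left hCw
  have hBw : Disjoint B w.1 := Finset.sdiff_disjoint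
  have hCv : Disjoint C v.1 := Finset.sdiff_disjoint
  have hvAB : v.1 = A ∪ B := by
    rw [Finset.union_comm]
    exact (Finset.sdiff_union_inter v.1 w.1).symm
  have hwAC : w.1 = A ∪ C := by
    rw [Finset.union_comm, hA_def, Finset.inter_comm]
    exact (Finset.sdiff_union_inter w.1 v.1).symm
  have huniv : A ∪ B ∪ C ∪ D = Finset.univ := by
    ext x
    simp only [Finset.mem_union, Finset.mem_compl, hA_def, hB_def, hC_def, hD_def,
      Finset.mem_inter, Finset.mem_sdiff, Finset.mem_univ, iff_true]
    tauto
  have hdecomp : ∀ s : Finset (Fin n), s = s ∩ A ∪ s ∩ B ∪ s ∩ C ∪ s ∩ D := by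
    intro s
    conv_lhs => rw [← Finset.inter_univ s, ← huniv]
    rw [Finset.inter_union_distrib_left, Finset.inter_union_distrib_left,
      Finset.inter_union_distrib_left]
  have hcards : ∀ s : Finset (Fin n),
      s.card = (s ∩ A).card + (s ∩ B).card + (s ∩ C).card + (s ∩ D).card := by
    intro s
    conv_lhs => rw [hdecomp s]
    rw [Finset.card_union_of_disjoint, Finset.card_union_of_disjoint,
      Finset.card_union_of_disjoint]
    · exact hAB.mono Finset.inter_subset_right Finset.inter_subset_right
    · exact Finset.disjoint_union_left.mpr
        ⟨hAC.mono Finset.inter_subset_right Finset.inter_subset_right,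
         hBC.mono Finset.inter_subset_right Finset.inter_subset_right⟩
    · exact Finset.disjoint_union_left.mpr
        ⟨Finset.disjoint_union_left.mpr
          ⟨hAD.mono Finset.inter_subset_right Finset.inter_subset_right,
           hBD.mono Finset.inter_subset_right Finset.inter_subset_right⟩,
         hCD.mono Finset.inter_subset_right Finset.inter_subset_right⟩
  have hv_split : ∀ s : Finset (Fin n), (s ∩ v.1).card = (s ∩ A).card + (s ∩ B).card := by
    intro s
    rw [hvAB, Finset.inter_union_distrib_left,
      Finset.card_union_of_disjoint
        (hAB.mono Finset.inter_subset_right Finset.inter_subset_right)]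
  have hw_split : ∀ s : Finset (Fin n), (s ∩ w.1).card = (s ∩ A).card + (s ∩ C).card := by
    intro s
    rw [hwAC, Finset.inter_union_distrib_left,
      Finset.card_union_of_disjoint
        (hAC.mono Finset.inter_subset_right Finset.inter_subset_right)]
  set F : Finset (Finset (Fin n)) :=
    (Finset.univ.powersetCard 4).filter
      (fun s => (s ∩ v.1).card = 2 ∧ (s ∩ w.1).card = 2) with hF_def
  have hmemF : ∀ s : Finset (Fin n),
      s ∈ F ↔ s.card = 4 ∧ (s ∩ v.1).card = 2 ∧ (s ∩ w.1).card = 2 := by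
    intro s
    simp [hF_def, Finset.mem_powersetCard_univ]
  -- Step 1 : the count is `F.card`
  have hstep : Nat.card ((genJohnson n 4 {2}).commonNeighbors v w) = F.card := by
    rw [Nat.card_eq_fintype_card, ← Set.toFinset_card]
    apply Finset.card_bij (fun u _ => u.1)
    · intro u hu
      rw [Set.mem_toFinset, SimpleGraph.mem_commonNeighbors] at hu
      obtain ⟨⟨-, h1⟩, -, h2⟩ := hu
      simp only [Set.mem_singleton_iff] at h1 h2
      rw [hmemF]
      exact ⟨u.2, by rwa [Finset.inter_comm], by rwa [Finset.inter_comm]⟩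
    · intro a _ b _ h
      exact Subtype.ext h
    · intro s hs
      rw [hmemF] at hs
      obtain ⟨hs4, hs1, hs2⟩ := hs
      refine ⟨⟨s, hs4⟩, ?_, rfl⟩
      rw [Set.mem_toFinset, SimpleGraph.mem_commonNeighbors]
      constructor
      · refine ⟨?_, ?_⟩
        · intro h
          have hh : v.1 = s := congrArg Subtype.val h
          rw [← hh, Finset.inter_self, hv4] at hs1
          omega
        · simpa [genJohnson, Finset.inter_comm] using hs1
      · refine ⟨?_, ?_⟩
        · intro h
          have hh : w.1 = s := congrArg Subtype.val h
          rw [← hh, Finset.inter_self, hw4] at hs2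
          omega
        · simpa [genJohnson, Finset.inter_comm] using hs2
  -- the three parts
  set F0 := F.filter (fun s => (s ∩ A).card = 0) with hF0_def
  set F1 := F.filter (fun s => (s ∩ A).card = 1) with hF1_def
  set F2 := F.filter (fun s => (s ∩ A).card = 2) with hF2_def
  have hsplitF : F.card = F0.card + F1.card + F2.card := by
    have hun : F = F0 ∪ F1 ∪ F2 := by
      ext s
      simp only [hF0_def, hF1_def, hF2_def, Finset.mem_union, Finset.mem_filter]
      constructor
      · intro hs
        have hle : (s ∩ A).card ≤ 2 := hA ▸ Finset.card_le_card Finset.inter_subset_right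
        have : (s ∩ A).card = 0 ∨ (s ∩ A).card = 1 ∨ (s ∩ A).card = 2 := by omega
        tauto
      · tauto
    rw [hun, Finset.card_union_of_disjoint, Finset.card_union_of_disjoint]
    · rw [Finset.disjoint_left]
      intro s hs hs'
      simp only [hF0_def, hF1_def, Finset.mem_filter] at hs hs'
      omega
    · rw [Finset.disjoint_left]
      intro s hs hs'
      simp only [hF0_def, hF1_def, hF2_def, Finset.mem_union, Finset.mem_filter] at hs hs'
      rcases hs with h | h <;> omega
  -- part sizes: the key profile lemma
  have hprofile : ∀ s ∈ F, (s ∩ B).card = 2 - (s ∩ A).card ∧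
      (s ∩ C).card = 2 - (s ∩ A).card ∧ (s ∩ D).card = (s ∩ A).card ∧ (s ∩ A).card ≤ 2 := by
    intro s hs
    rw [hmemF] at hs
    obtain ⟨hs4, hs1, hs2⟩ := hs
    have e1 := hv_split s
    have e2 := hw_split s
    have e3 := hcards s
    have hle : (s ∩ A).card ≤ 2 := hA ▸ Finset.card_le_card Finset.inter_subset_right
    omega
  -- F0
  have hF0card : F0.card = 1 := by
    have : F0 = {B ∪ C} := by
      ext s
      simp only [hF0_def, Finset.mem_filter, Finset.mem_singleton]
      constructor
      · rintro ⟨hsF, ha0⟩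
        obtain ⟨hb, hc, hd, -⟩ := hprofile s hsF
        rw [ha0] at hb hc hd
        have hsB : s ∩ B = B :=
          Finset.eq_of_subset_of_card_le Finset.inter_subset_right (by omega)
        have hsC : s ∩ C = C :=
          Finset.eq_of_subset_of_card_le Finset.inter_subset_right (by omega)
        have hsA : s ∩ A = ∅ := Finset.card_eq_zero.mp ha0
        have hsD : s ∩ D = ∅ := Finset.card_eq_zero.mp hd
        have := hdecomp s
        rw [hsA, hsB, hsC, hsD] at this
        simpa using this
      · rintro rfl
        have hBCv : (B ∪ C) ∩ v.1 = B := by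
          rw [Finset.union_inter_distrib_right, Finset.inter_eq_left.mpr hBv,
            Finset.disjoint_iff_inter_eq_empty.mp hCv, Finset.union_empty]
        have hBCw : (B ∪ C) ∩ w.1 = C := by
          rw [Finset.union_inter_distrib_right, Finset.inter_eq_left.mpr hCw,
            Finset.disjoint_iff_inter_eq_empty.mp hBw, Finset.empty_union]
        have hBCA : (B ∪ C) ∩ A = ∅ := by
          rw [Finset.union_inter_distrib_right,
            Finset.disjoint_iff_inter_eq_empty.mp hAB.symm,
            Finset.disjoint_iff_inter_eq_empty.mp hAC.symm, Finset.union_empty]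
        refine ⟨?_, by rw [hBCA]; simp⟩
        rw [hmemF, Finset.card_union_of_disjoint hBC, hBCv, hBCw]
        exact ⟨by omega, hB, hC⟩
    rw [this, Finset.card_singleton]
  -- F2
  have hF2card : F2.card = (n - 6).choose 2 := by
    rw [← hD, ← Finset.card_powersetCard]
    apply Finset.card_bij' (fun s _ => s ∩ D) (fun t _ => A ∪ t)
    · intro s hs
      simp only [hF2_def, Finset.mem_filter] at hs
      obtain ⟨hsF, ha2⟩ := hs
      obtain ⟨-, -, hd, -⟩ := hprofile s hsF
      rw [Finset.mem_powersetCard]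
      exact ⟨Finset.inter_subset_right, by omega⟩
    · intro t ht
      rw [Finset.mem_powersetCard] at ht
      obtain ⟨htD, ht2⟩ := ht
      have hAt : Disjoint A t := hAD.mono_right htD
      have htv : Disjoint t v.1 := (hvD.mono_right htD).symm
      have htw : Disjoint t w.1 := (hwD.mono_right htD).symm
      have hAtv : (A ∪ t) ∩ v.1 = A := by
        rw [Finset.union_inter_distrib_right, Finset.inter_eq_left.mpr hAv,
          Finset.disjoint_iff_inter_eq_empty.mp htv, Finset.union_empty]
      have hAtw : (A ∪ t) ∩ w.1 = A := by
        rw [Finset.union_inter_distrib_right, Finset.inter_eq_left.mpr hAw,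
          Finset.disjoint_iff_inter_eq_empty.mp htw, Finset.union_empty]
      have hAtA : (A ∪ t) ∩ A = A := by
        rw [Finset.union_inter_distrib_right, Finset.inter_self,
          Finset.disjoint_iff_inter_eq_empty.mp hAt.symm, Finset.union_empty]
      simp only [hF2_def, Finset.mem_filter]
      refine ⟨?_, by rw [hAtA, hA]⟩
      rw [hmemF, Finset.card_union_of_disjoint hAt, hAtv, hAtw]
      exact ⟨by omega, hA, hA⟩
    · intro s hs
      simp only [hF2_def, Finset.mem_filter] at hs
      obtain ⟨hsF, ha2⟩ := hs
      obtain ⟨hb, hc, -, -⟩ := hprofile s hsF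
      rw [ha2] at hb hc
      have hsA : s ∩ A = A :=
        Finset.eq_of_subset_of_card_le Finset.inter_subset_right (by omega)
      have hsB : s ∩ B = ∅ := Finset.card_eq_zero.mp (by omega)
      have hsC : s ∩ C = ∅ := Finset.card_eq_zero.mp (by omega)
      have hd := hdecomp s
      rw [hsA, hsB, hsC] at hd
      conv_rhs => rw [hd]
      simp
    · intro t ht
      rw [Finset.mem_powersetCard] at ht
      obtain ⟨htD, -⟩ := ht
      rw [Finset.union_inter_distrib_right,
        Finset.disjoint_iff_inter_eq_empty.mp hAD, Finset.inter_eq_left.mpr htD,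
        Finset.empty_union]
  -- F1
  have hF1card : F1.card = 8 * (n - 6) := by
    have hcardP : (((A ×ˢ B) ×ˢ (C ×ˢ D)).card) = 8 * (n - 6) := by
      rw [Finset.card_product, Finset.card_product, Finset.card_product, hA, hB, hC, hD]
      ring
    rw [← hcardP]
    apply (Finset.card_bij (fun p _ => ({p.1.1, p.1.2, p.2.1, p.2.2} : Finset (Fin n))) ?_ ?_ ?_).symm
    · -- maps into F1
      rintro ⟨⟨x, y⟩, z, p⟩ hp
      simp only [Finset.mem_product] at hp
      obtain ⟨⟨hx, hy⟩, hz, hp'⟩ := hp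
      have hxy : x ≠ y := fun h => Finset.disjoint_left.mp hAB hx (h ▸ hy)
      have hxz : x ≠ z := fun h => Finset.disjoint_left.mp hAC hx (h ▸ hz)
      have hxp : x ≠ p := fun h => Finset.disjoint_left.mp hAD hx (h ▸ hp')
      have hyz : y ≠ z := fun h => Finset.disjoint_left.mp hBC hy (h ▸ hz)
      have hyp : y ≠ p := fun h => Finset.disjoint_left.mp hBD hy (h ▸ hp')
      have hzp : z ≠ p := fun h => Finset.disjoint_left.mp hCD hz (h ▸ hp')
      have hxv : x ∈ v.1 := hAv hx
      have hyv : y ∈ v.1 := hBv hy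
      have hzv : z ∉ v.1 := Finset.disjoint_left.mp hCv hz
      have hpv : p ∉ v.1 := Finset.disjoint_left.mp hvD.symm hp'
      have hxw : x ∈ w.1 := hAw hx
      have hzw : z ∈ w.1 := hCw hz
      have hyw : y ∉ w.1 := Finset.disjoint_left.mp hBw hy
      have hpw : p ∉ w.1 := Finset.disjoint_left.mp hwD.symm hp'
      have hiv : ({x, y, z, p} : Finset (Fin n)) ∩ v.1 = {x, y} := by
        ext a
        simp only [Finset.mem_inter, Finset.mem_insert, Finset.mem_singleton]
        constructor
        · rintro ⟨h1, h2⟩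
          rcases h1 with rfl | rfl | rfl | rfl
          · exact Or.inl rfl
          · exact Or.inr rfl
          · exact absurd h2 hzv
          · exact absurd h2 hpv
        · rintro (rfl | rfl)
          · exact ⟨Or.inl rfl, hxv⟩
          · exact ⟨Or.inr (Or.inl rfl), hyv⟩
      have hiw : ({x, y, z, p} : Finset (Fin n)) ∩ w.1 = {x, z} := by
        ext a
        simp only [Finset.mem_inter, Finset.mem_insert, Finset.mem_singleton]
        constructor
        · rintro ⟨h1, h2⟩
          rcases h1 with rfl | rfl | rfl | rfl
          · exact Or.inl rfl
          · exact absurd h2 hyw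
          · exact Or.inr rfl
          · exact absurd h2 hpw
        · rintro (rfl | rfl)
          · exact ⟨Or.inl rfl, hxw⟩
          · exact ⟨Or.inr (Or.inr (Or.inl rfl)), hzw⟩
      have hyA : y ∉ A := Finset.disjoint_left.mp hAB.symm hy
      have hzA : z ∉ A := Finset.disjoint_left.mp hAC.symm hz
      have hpA : p ∉ A := Finset.disjoint_left.mp hAD.symm hp'
      have hiA : ({x, y, z, p} : Finset (Fin n)) ∩ A = {x} := by
        ext a
        simp only [Finset.mem_inter, Finset.mem_insert, Finset.mem_singleton]
        constructor
        · rintro ⟨h1, h2⟩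
          rcases h1 with rfl | rfl | rfl | rfl
          · rfl
          · exact absurd h2 hyA
          · exact absurd h2 hzA
          · exact absurd h2 hpA
        · rintro rfl
          exact ⟨Or.inl rfl, hx⟩
      simp only [hF1_def, Finset.mem_filter]
      refine ⟨?_, by rw [hiA]; simp⟩
      rw [hmemF, hiv, hiw]
      refine ⟨?_, ?_, ?_⟩
      · rw [Finset.card_insert_of_notMem (by simp [hxy, hxz, hxp]),
          Finset.card_insert_of_notMem (by simp [hyz, hyp]),
          Finset.card_insert_of_notMem (by simp [hzp]), Finset.card_singleton]
      · rw [Finset.card_insert_of_notMem (by simp [hxy]), Finset.card_singleton]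
      · rw [Finset.card_insert_of_notMem (by simp [hxz]), Finset.card_singleton]
    · -- injective
      rintro ⟨⟨x, y⟩, z, p⟩ hp ⟨⟨x', y'⟩, z', p'⟩ hp' heq
      simp only [Finset.mem_product] at hp hp'
      obtain ⟨⟨hx, hy⟩, hz, hpD⟩ := hp
      obtain ⟨⟨hx', hy'⟩, hz', hpD'⟩ := hp'
      have heq' : ({x, y, z, p} : Finset (Fin n)) = {x', y', z', p'} := heq
      have hmem : ∀ a, a ∈ ({x, y, z, p} : Finset (Fin n)) ↔
          a ∈ ({x', y', z', p'} : Finset (Fin n)) := fun a => by rw [heq']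
      have hxx : x = x' := by
        have := (hmem x).mp (by simp)
        simp only [Finset.mem_insert, Finset.mem_singleton] at this
        rcases this with h | h | h | h
        · exact h
        · exact absurd (h ▸ hx) (Finset.disjoint_left.mp hAB.symm hy')
        · exact absurd (h ▸ hx) (Finset.disjoint_left.mp hAC.symm hz')
        · exact absurd (h ▸ hx) (Finset.disjoint_left.mp hAD.symm hpD')
      have hyy : y = y' := by
        have := (hmem y).mp (by simp)
        simp only [Finset.mem_insert, Finset.mem_singleton] at this
        rcases this with h | h | h | h
        · exact absurd (h ▸ hy) (Finset.disjoint_left.mp hAB hx')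
        · exact h
        · exact absurd (h ▸ hy) (Finset.disjoint_left.mp hBC.symm hz')
        · exact absurd (h ▸ hy) (Finset.disjoint_left.mp hBD.symm hpD')
      have hzz : z = z' := by
        have := (hmem z).mp (by simp)
        simp only [Finset.mem_insert, Finset.mem_singleton] at this
        rcases this with h | h | h | h
        · exact absurd (h ▸ hz) (Finset.disjoint_left.mp hAC hx')
        · exact absurd (h ▸ hz) (Finset.disjoint_left.mp hBC hy')
        · exact h
        · exact absurd (h ▸ hz) (Finset.disjoint_left.mp hCD.symm hpD')
      have hpp : p = p' := by
        have := (hmem p).mp (by simp)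
        simp only [Finset.mem_insert, Finset.mem_singleton] at this
        rcases this with h | h | h | h
        · exact absurd (h ▸ hpD) (Finset.disjoint_left.mp hAD hx')
        · exact absurd (h ▸ hpD) (Finset.disjoint_left.mp hBD hy')
        · exact absurd (h ▸ hpD) (Finset.disjoint_left.mp hCD hz')
        · exact h
      simp [hxx, hyy, hzz, hpp]
    · -- surjective
      intro s hs
      simp only [hF1_def, Finset.mem_filter] at hs
      obtain ⟨hsF, ha1⟩ := hs
      obtain ⟨hb, hc, hd, -⟩ := hprofile s hsF
      rw [ha1] at hb hc hd
      obtain ⟨x, hx⟩ := Finset.card_eq_one.mp ha1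
      obtain ⟨y, hy⟩ := Finset.card_eq_one.mp (show (s ∩ B).card = 1 by omega)
      obtain ⟨z, hz⟩ := Finset.card_eq_one.mp (show (s ∩ C).card = 1 by omega)
      obtain ⟨p, hp⟩ := Finset.card_eq_one.mp (show (s ∩ D).card = 1 by omega)
      have hxA : x ∈ A := Finset.inter_subset_right (hx ▸ Finset.mem_singleton_self x)
      have hyB : y ∈ B := Finset.inter_subset_right (hy ▸ Finset.mem_singleton_self y)
      have hzC : z ∈ C := Finset.inter_subset_right (hz ▸ Finset.mem_singleton_self z)
      have hpD : p ∈ D := Finset.inter_subset_right (hp ▸ Finset.mem_singleton_self p)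
      refine ⟨⟨⟨x, y⟩, ⟨z, p⟩⟩, ?_, ?_⟩
      · simp only [Finset.mem_product]
        exact ⟨⟨hxA, hyB⟩, hzC, hpD⟩
      · show ({x, y, z, p} : Finset (Fin n)) = s
        have hds := hdecomp s
        rw [hx, hy, hz, hp] at hds
        rw [hds]
        ext a
        simp only [Finset.mem_insert, Finset.mem_singleton, Finset.mem_union]
        tauto
  -- put things together
  rw [hstep, hsplitF, hF0card, hF1card, hF2card]
  obtain ⟨m, rfl⟩ : ∃ m, n = m + 8 := ⟨n - 8, by omega⟩
  have h1 : m + 8 - 6 = m + 2 := by omega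
  rw [h1, Nat.choose_two_right]
  have h2 : (m + 2) * (m + 2 - 1) = m * m + 3 * m + 2 := by
    rw [show m + 2 - 1 = m + 1 by omega]; ring
  have h3 : (m + 8) * (m + 8 + 3) = m * m + 19 * m + 88 := by ring
  rw [h2, h3]
  generalize m * m = q
  omega
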